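/- Let a > 0 and let L = (ℓ_j)_{j≥1} be the fractal string with ℓ_j = j^{−a} − (j+1)^{−a} (the a-string, whose boundary is {0} ∪ {j^{−a} : j ≥ 1}). Then the Minkowski dimension of L is D = 1/(a+1), and L is Minkowski measurable with Minkowski content M = 2^{1−D} a^D / (1−D). -/

import Mathlib

open Filter Topology

/-- A fractal string: a nonincreasing, positive, summable sequence of lengths
`ℓ 0 ≥ ℓ 1 ≥ ⋯ > 0` (indexed from `0`, representing `ℓ_1, ℓ_2, …`). -/
def IsFractalString (ℓ : ℕ → ℝ) : Prop :=
  (∀ j, 0 < ℓ j) ∧ Antitone ℓ ∧ Summable ℓ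

/-- The volume `V(ε) = ∑ⱼ min(ℓⱼ, 2ε)` of the inner ε-neighborhood of the boundary. -/
noncomputable def stringVol (ℓ : ℕ → ℝ) (ε : ℝ) : ℝ :=
  ∑' j, min (ℓ j) (2 * ε)

/-- Upper `d`-dimensional Minkowski content `limsup_{ε→0⁺} V(ε)/ε^{1-d}`. -/
noncomputable def upperContent (ℓ : ℕ → ℝ) (d : ℝ) : ENNReal :=
  Filter.limsup (fun ε : ℝ => ENNReal.ofReal (stringVol ℓ ε / ε ^ (1 - d))) (𝓝[>] 0)

/-- Lower `d`-dimensional Minkowski content `liminf_{ε→0⁺} V(ε)/ε^{1-d}`. -/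
noncomputable def lowerContent (ℓ : ℕ → ℝ) (d : ℝ) : ENNReal :=
  Filter.liminf (fun ε : ℝ => ENNReal.ofReal (stringVol ℓ ε / ε ^ (1 - d))) (𝓝[>] 0)

/-- The Minkowski dimension `D = inf {d ≥ 0 : M*_d < ∞}`. -/
noncomputable def minkDim (ℓ : ℕ → ℝ) : ℝ :=
  sInf {d : ℝ | 0 ≤ d ∧ upperContent ℓ d < ⊤}

/-- The spectral (frequency) counting function `N_ν(x) = ∑ⱼ ⌊ℓⱼ x⌋`. -/
noncomputable def spectralCount (ℓ : ℕ → ℝ) (x : ℝ) : ℝ :=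
  ∑' j, (⌊ℓ j * x⌋₊ : ℝ)

/-- The Weyl term `W(x) = (∑ⱼ ℓⱼ) x`. -/
noncomputable def weylTerm (ℓ : ℕ → ℝ) (x : ℝ) : ℝ :=
  (∑' j, ℓ j) * x

/-- The geometric counting function `N_L(x) = #{j ≥ 1 : ℓⱼ⁻¹ ≤ x}`. -/
noncomputable def geomCount (ℓ : ℕ → ℝ) (x : ℝ) : ℝ :=
  (({j : ℕ | (ℓ j)⁻¹ ≤ x}).ncard : ℝ)

/-- The "asymptotic second term" `φ_ν(x) = W(x) - N_ν(x)`. -/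
noncomputable def phiNu (ℓ : ℕ → ℝ) (x : ℝ) : ℝ :=
  weylTerm ℓ x - spectralCount ℓ x

/-- `L` is Minkowski measurable (in dimension `D`) with Minkowski content `M`:
`V(ε)/ε^{1-D} → M` as `ε → 0⁺`. -/
def MinkMeasurableWith (ℓ : ℕ → ℝ) (D M : ℝ) : Prop :=
  Tendsto (fun ε : ℝ => stringVol ℓ ε / ε ^ (1 - D)) (𝓝[>] (0:ℝ)) (𝓝 M)

/-- `L` is Minkowski measurable in dimension `D` (with some positive finite content). -/
def MinkMeasurable (ℓ : ℕ → ℝ) (D : ℝ) : Prop :=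
  ∃ M : ℝ, 0 < M ∧ MinkMeasurableWith ℓ D M

/-- Hypothesis (6.1): `N_ν(x) = W(x) - C x^D + o(x^D)` as `x → +∞`. -/
def SpectralAsymp (ℓ : ℕ → ℝ) (D C : ℝ) : Prop :=
  Tendsto (fun x : ℝ => (spectralCount ℓ x - (weylTerm ℓ x - C * x ^ D)) / x ^ D)
    atTop (𝓝 0)

/-- The inverse spectral problem `(ISP)_D`: every fractal string of Minkowski
dimension `D` satisfying (6.1) is Minkowski measurable. -/
def ISP (D : ℝ) : Prop :=
  ∀ ℓ : ℕ → ℝ, IsFractalString ℓ → minkDim ℓ = D →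
    (∃ C : ℝ, C ≠ 0 ∧ SpectralAsymp ℓ D C) → MinkMeasurable ℓ D


noncomputable def aStr (a : ℝ) (j : ℕ) : ℝ := ((j:ℝ)+1) ^ (-a) - ((j:ℝ)+2) ^ (-a)

noncomputable def Jf (a ε : ℝ) : ℕ := sInf {j | aStr a j ≤ 2 * ε}

lemma aStr_bounds {a : ℝ} (ha : 0 < a) (x : ℝ) (hx : 0 < x) :
    a * (x+1) ^ (-(a+1)) ≤ x ^ (-a) - (x+1) ^ (-a) ∧
    x ^ (-a) - (x+1) ^ (-a) ≤ a * x ^ (-(a+1)) := by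
  obtain ⟨c, hc, hderiv⟩ := exists_hasDerivAt_eq_slope (fun t : ℝ => t ^ (-a))
    (fun t : ℝ => (-a) * t ^ (-a-1)) (show x < x+1 by linarith)
    (by
      apply ContinuousOn.rpow_const continuousOn_id
      intro t ht
      exact Or.inl (by simp only [id]; nlinarith [ht.1]))
    (by
      intro t ht
      exact Real.hasDerivAt_rpow_const (Or.inl (by nlinarith [ht.1])))
  have hc0 : 0 < c := lt_trans hx hc.1
  have key : x ^ (-a) - (x+1) ^ (-a) = a * c ^ (-(a+1)) := by
    have h1 : x + 1 - x = 1 := by ring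
    rw [h1, div_one] at hderiv
    have : -(a+1) = -a-1 := by ring
    rw [this]; nlinarith [hderiv]
  constructor
  · rw [key]
    have := Real.rpow_le_rpow_of_nonpos hc0 hc.2.le (show -(a+1) ≤ 0 by linarith)
    nlinarith
  · rw [key]
    have := Real.rpow_le_rpow_of_nonpos hx hc.1.le (show -(a+1) ≤ 0 by linarith)
    nlinarith

lemma aStr_pos {a : ℝ} (ha : 0 < a) (j : ℕ) : 0 < aStr a j := by
  have h := (aStr_bounds ha ((j:ℝ)+1) (by positivity)).1
  have h2 : (0:ℝ) < a * ((j:ℝ)+2) ^ (-(a+1)) := by positivity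
  unfold aStr
  have e : (j:ℝ)+1+1 = (j:ℝ)+2 := by ring
  rw [e] at h
  linarith

lemma aStr_antitone {a : ℝ} (ha : 0 < a) : Antitone (aStr a) := by
  apply antitone_nat_of_succ_le
  intro j
  have h1 := (aStr_bounds ha ((j:ℝ)+1) (by positivity)).1
  have h2 := (aStr_bounds ha ((j:ℝ)+2) (by positivity)).2
  unfold aStr
  push_cast
  have e1 : (j:ℝ)+1+1 = (j:ℝ)+2 := by ring
  have e2 : (j:ℝ)+2+1 = (j:ℝ)+3 := by ring
  rw [e1] at h1
  rw [e2] at h2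
  calc ((j:ℝ)+1+1) ^ (-a) - ((j:ℝ)+1+2) ^ (-a)
      = ((j:ℝ)+2) ^ (-a) - ((j:ℝ)+3) ^ (-a) := by ring_nf
    _ ≤ a * ((j:ℝ)+2) ^ (-(a+1)) := h2
    _ ≤ ((j:ℝ)+1) ^ (-a) - ((j:ℝ)+2) ^ (-a) := h1

lemma aStr_tail {a : ℝ} (ha : 0 < a) (J : ℕ) :
    HasSum (fun i => aStr a (i + J)) (((J:ℝ)+1) ^ (-a)) := by
  set g : ℕ → ℝ := fun i => ((i:ℝ)+(J:ℝ)+1) ^ (-a) with hg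
  have hterm : ∀ i, aStr a (i + J) = g i - g (i+1) := by
    intro i
    simp only [aStr, hg]
    push_cast
    ring_nf
  have hpartial : ∀ n, ∑ i ∈ Finset.range n, aStr a (i + J) = g 0 - g n := by
    intro n
    rw [← Finset.sum_range_sub' g n]
    exact Finset.sum_congr rfl fun i _ => hterm i
  have hgl : Tendsto g atTop (𝓝 0) := by
    have h1 : Tendsto (fun i : ℕ => (i:ℝ)+(J:ℝ)+1) atTop atTop :=
      tendsto_atTop_add_const_right _ _ (tendsto_atTop_add_const_right _ _ tendsto_natCast_atTop_atTop)
    exact (tendsto_rpow_neg_atTop ha).comp h1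
  have hsum : Tendsto (fun n => ∑ i ∈ Finset.range n, aStr a (i + J)) atTop (𝓝 (g 0 - 0)) := by
    simp only [hpartial]
    exact tendsto_const_nhds.sub hgl
  have hg0 : g 0 - 0 = ((J:ℝ)+1) ^ (-a) := by simp [hg]
  rw [hg0] at hsum
  exact (hasSum_iff_tendsto_nat_of_nonneg (fun i => (aStr_pos ha (i+J)).le) _).mpr hsum

lemma aStr_summable {a : ℝ} (ha : 0 < a) : Summable (aStr a) := by
  have := (aStr_tail ha 0).summable
  simpa using this

lemma Jf_mem {a : ℝ} (ha : 0 < a) {ε : ℝ} (hε : 0 < ε) : aStr a (Jf a ε) ≤ 2 * ε := by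
  have hne : {j | aStr a j ≤ 2 * ε}.Nonempty := by
    have h0 := (aStr_summable ha).tendsto_atTop_zero
    have := (h0.eventually (eventually_le_nhds (show (0:ℝ) < 2*ε by linarith))).exists
    obtain ⟨j, hj⟩ := this
    exact ⟨j, hj⟩
  exact Nat.sInf_mem hne

lemma Jf_lt {a : ℝ} (ha : 0 < a) {ε : ℝ} {j : ℕ} (hj : j < Jf a ε) : 2 * ε < aStr a j := by
  have := Nat.notMem_of_lt_sInf hj
  simpa using lt_of_not_ge this

lemma vol_formula {a : ℝ} (ha : 0 < a) {ε : ℝ} (hε : 0 < ε) :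
    stringVol (aStr a) ε = 2 * ε * (Jf a ε : ℝ) + ((Jf a ε : ℝ)+1) ^ (-a) := by
  set J := Jf a ε with hJ
  have hminsum : Summable (fun j => min (aStr a j) (2*ε)) := by
    apply Summable.of_nonneg_of_le (fun j => le_min (aStr_pos ha j).le (by linarith))
      (fun j => min_le_left _ _) (aStr_summable ha)
  have hsplit := Summable.sum_add_tsum_nat_add J hminsum
  have h1 : ∑ i ∈ Finset.range J, min (aStr a i) (2*ε) = (J:ℝ) * (2*ε) := by
    rw [Finset.sum_congr rfl (fun i hi => min_eq_right
      (Jf_lt ha (Finset.mem_range.mp hi)).le)]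
    simp [mul_comm, hJ]
  have h2 : ∑' i, min (aStr a (i + J)) (2*ε) = ((J:ℝ)+1) ^ (-a) := by
    have : ∀ i, min (aStr a (i + J)) (2*ε) = aStr a (i + J) := by
      intro i
      exact min_eq_left (le_trans (aStr_antitone ha (Nat.le_add_left J i)) (Jf_mem ha hε))
    rw [tsum_congr this]
    exact (aStr_tail ha J).tsum_eq
  unfold stringVol
  rw [← hsplit, h1, h2]
  ring

lemma Jf_upper {a : ℝ} (ha : 0 < a) {ε : ℝ} (hε : 0 < ε) :
    (Jf a ε : ℝ) ≤ (a/(2*ε)) ^ (1/(a+1)) := by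
  have ha1 : (0:ℝ) < a + 1 := by linarith
  rcases Nat.eq_zero_or_pos (Jf a ε) with h0 | hpos
  · rw [h0]; push_cast; positivity
  · obtain ⟨k, hk⟩ := Nat.exists_eq_succ_of_ne_zero hpos.ne'
    have hlt : 2 * ε < aStr a k := Jf_lt ha (by omega)
    have hub := (aStr_bounds ha ((k:ℝ)+1) (by positivity)).2
    have e1 : (k:ℝ)+1+1 = (k:ℝ)+2 := by ring
    rw [e1] at hub
    have hJk : (Jf a ε : ℝ) = (k:ℝ)+1 := by rw [hk]; push_cast; ring
    have hJpos : (0:ℝ) < (Jf a ε : ℝ) := by rw [hJk]; positivity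
    have h2 : 2 * ε < a * ((Jf a ε : ℝ)) ^ (-(a+1)) := by
      rw [hJk]
      calc 2*ε < aStr a k := hlt
        _ ≤ a * ((k:ℝ)+1) ^ (-(a+1)) := hub
    rw [Real.rpow_neg hJpos.le] at h2
    have h3 : (Jf a ε : ℝ) ^ (a+1) < a / (2*ε) := by
      rw [lt_div_iff₀ (by linarith)]
      have hp : (0:ℝ) < (Jf a ε : ℝ) ^ (a+1) := Real.rpow_pos_of_pos hJpos _
      calc (Jf a ε : ℝ) ^ (a+1) * (2*ε) < (Jf a ε : ℝ) ^ (a+1) * (a * ((Jf a ε : ℝ) ^ (a+1))⁻¹) :=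
            by apply mul_lt_mul_of_pos_left h2 hp
        _ = a := by field_simp
    have h4 := Real.rpow_lt_rpow (Real.rpow_nonneg hJpos.le _) h3 (by positivity : (0:ℝ) < 1/(a+1))
    rw [← Real.rpow_mul hJpos.le, mul_one_div_cancel ha1.ne', Real.rpow_one] at h4
    exact h4.le

lemma Jf_lower {a : ℝ} (ha : 0 < a) {ε : ℝ} (hε : 0 < ε) :
    (a/(2*ε)) ^ (1/(a+1)) - 2 ≤ (Jf a ε : ℝ) := by
  have ha1 : (0:ℝ) < a + 1 := by linarith
  set J := Jf a ε with hJdef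
  have hlb := (aStr_bounds ha ((J:ℝ)+1) (by positivity)).1
  have e1 : (J:ℝ)+1+1 = (J:ℝ)+2 := by ring
  rw [e1] at hlb
  have h1 : a * ((J:ℝ)+2) ^ (-(a+1)) ≤ 2*ε := le_trans hlb (Jf_mem ha hε)
  have hJ2 : (0:ℝ) < (J:ℝ)+2 := by positivity
  rw [Real.rpow_neg hJ2.le] at h1
  have hp : (0:ℝ) < ((J:ℝ)+2) ^ (a+1) := Real.rpow_pos_of_pos hJ2 _
  have h2 : a / (2*ε) ≤ ((J:ℝ)+2) ^ (a+1) := by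
    rw [div_le_iff₀ (by linarith)]
    calc a = ((J:ℝ)+2) ^ (a+1) * (a * (((J:ℝ)+2) ^ (a+1))⁻¹) := by field_simp
      _ ≤ ((J:ℝ)+2) ^ (a+1) * (2*ε) := by apply mul_le_mul_of_nonneg_left h1 hp.le
  have h3 := Real.rpow_le_rpow (by positivity) h2 (by positivity : (0:ℝ) ≤ 1/(a+1))
  rw [← Real.rpow_mul hJ2.le, mul_one_div_cancel ha1.ne', Real.rpow_one] at h3
  linarith

lemma tendsto_rpow_zero {p : ℝ} (hp : 0 < p) :
    Tendsto (fun ε : ℝ => ε ^ p) (𝓝[>] 0) (𝓝 0) := by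
  have h := (Real.continuousAt_rpow_const 0 p (Or.inr hp.le)).tendsto
  rw [Real.zero_rpow hp.ne'] at h
  exact h.mono_left nhdsWithin_le_nhds

lemma Jmul_tendsto {a : ℝ} (ha : 0 < a) :
    Tendsto (fun ε : ℝ => (Jf a ε : ℝ) * ε ^ (1/(a+1))) (𝓝[>] 0)
      (𝓝 ((a/2) ^ (1/(a+1)))) := by
  set D := 1/(a+1) with hD
  have hDpos : 0 < D := by rw [hD]; positivity
  have hTe : ∀ ε : ℝ, 0 < ε → (a/(2*ε)) ^ D * ε ^ D = (a/2) ^ D := by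
    intro ε hε
    rw [← Real.mul_rpow (by positivity) hε.le]
    congr 1
    field_simp
  apply tendsto_of_tendsto_of_tendsto_of_le_of_le'
    (g := fun ε : ℝ => (a/2) ^ D - 2 * ε ^ D) (h := fun _ => (a/2) ^ D)
  · have : Tendsto (fun ε : ℝ => 2 * ε ^ D) (𝓝[>] 0) (𝓝 0) := by
      have := (tendsto_rpow_zero hDpos).const_mul (2:ℝ)
      simpa using this
    have h2 := tendsto_const_nhds (α := ℝ) (x := (a/2) ^ D) (f := 𝓝[>] (0:ℝ)) |>.sub this
    simpa using h2
  · exact tendsto_const_nhds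
  · filter_upwards [eventually_mem_nhdsWithin] with ε (hε : ε ∈ Set.Ioi (0:ℝ))
    have hεD : (0:ℝ) ≤ ε ^ D := Real.rpow_nonneg (le_of_lt hε) _
    have := mul_le_mul_of_nonneg_right (Jf_lower ha hε) hεD
    calc (a/2) ^ D - 2 * ε ^ D = ((a/(2*ε)) ^ D - 2) * ε ^ D := by
          rw [sub_mul, hTe ε hε]
      _ ≤ (Jf a ε : ℝ) * ε ^ D := this
  · filter_upwards [eventually_mem_nhdsWithin] with ε (hε : ε ∈ Set.Ioi (0:ℝ))
    have hεD : (0:ℝ) ≤ ε ^ D := Real.rpow_nonneg (le_of_lt hε) _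
    calc (Jf a ε : ℝ) * ε ^ D ≤ (a/(2*ε)) ^ D * ε ^ D :=
          mul_le_mul_of_nonneg_right (Jf_upper ha hε) hεD
      _ = (a/2) ^ D := hTe ε hε

lemma content_value {a : ℝ} (ha : 0 < a) :
    2 * (a/2) ^ (1/(a+1)) + ((a/2) ^ (1/(a+1))) ^ (-a)
      = 2 ^ (1 - 1/(a+1)) * a ^ (1/(a+1)) / (1 - 1/(a+1)) := by
  have ha1 : (0:ℝ) < a + 1 := by linarith
  set D := 1/(a+1) with hD
  have hNval : (a/2 : ℝ) ^ D = a ^ D / 2 ^ D :=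
    Real.div_rpow ha.le (by norm_num : (0:ℝ) ≤ 2) D
  have h1 : ((a/2 : ℝ) ^ D) ^ (-a) = (a/2) ^ (D - 1) := by
    rw [← Real.rpow_mul (by positivity)]
    congr 1
    rw [hD]; field_simp; ring
  have h2 : (a/2 : ℝ) ^ (D - 1) = (a/2) ^ D * (a/2)⁻¹ := by
    rw [Real.rpow_sub (by positivity), Real.rpow_one]
    ring
  have h3 : (2:ℝ) ^ (1 - D) = 2 / 2 ^ D := by
    rw [Real.rpow_sub (by norm_num), Real.rpow_one]
  have h4 : (1:ℝ) - D = a / (a+1) := by rw [hD]; field_simp; ring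
  have h2D : (0:ℝ) < 2 ^ D := Real.rpow_pos_of_pos (by norm_num) _
  have haD : (0:ℝ) < a ^ D := Real.rpow_pos_of_pos ha _
  rw [h1, h2, h3, h4, hNval]
  field_simp

lemma mink_main {a : ℝ} (ha : 0 < a) :
    Tendsto (fun ε : ℝ => stringVol (aStr a) ε / ε ^ (1 - 1/(a+1))) (𝓝[>] 0)
      (𝓝 (2 ^ (1 - 1/(a+1)) * a ^ (1/(a+1)) / (1 - 1/(a+1)))) := by
  set D := 1/(a+1) with hD
  have hDpos : 0 < D := by rw [hD]; positivity
  set N := (a/2 : ℝ) ^ D with hN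
  have hNpos : 0 < N := Real.rpow_pos_of_pos (by positivity) _
  have hJ1 : Tendsto (fun ε : ℝ => ((Jf a ε : ℝ)+1) * ε ^ D) (𝓝[>] 0) (𝓝 N) := by
    have := (Jmul_tendsto ha).add (tendsto_rpow_zero hDpos)
    rw [add_zero] at this
    apply this.congr
    intro ε; ring
  have hpow : Tendsto (fun ε : ℝ => (((Jf a ε : ℝ)+1) * ε ^ D) ^ (-a)) (𝓝[>] 0)
      (𝓝 (N ^ (-a))) :=
    ((Real.continuousAt_rpow_const N (-a) (Or.inl hNpos.ne')).tendsto).comp hJ1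
  have hsum : Tendsto (fun ε : ℝ => 2 * ((Jf a ε : ℝ) * ε ^ D) + (((Jf a ε : ℝ)+1) * ε ^ D) ^ (-a))
      (𝓝[>] 0) (𝓝 (2 * N + N ^ (-a))) := ((Jmul_tendsto ha).const_mul 2).add hpow
  rw [← content_value ha]
  apply hsum.congr'
  filter_upwards [eventually_mem_nhdsWithin] with ε (hε : ε ∈ Set.Ioi (0:ℝ))
  have hε : (0:ℝ) < ε := hε
  have heD1 : ε ^ (D - 1) = (ε ^ D) ^ (-a) := by
    rw [← Real.rpow_mul hε.le]
    congr 1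
    rw [hD]; field_simp; ring
  have heD : ε * ε ^ (D - 1) = ε ^ D := by
    have h := Real.rpow_add hε 1 (D-1)
    rw [Real.rpow_one] at h
    rw [← h]
    norm_num
  calc 2 * ((Jf a ε : ℝ) * ε ^ D) + (((Jf a ε : ℝ)+1) * ε ^ D) ^ (-a)
      = 2 * ((Jf a ε : ℝ) * (ε * ε ^ (D-1))) + ((Jf a ε : ℝ)+1) ^ (-a) * (ε ^ D) ^ (-a) := by
        rw [heD, Real.mul_rpow (by positivity) (Real.rpow_nonneg hε.le _)]
    _ = (2 * ε * (Jf a ε : ℝ) + ((Jf a ε : ℝ)+1) ^ (-a)) * ε ^ (D - 1) := by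
        rw [heD1]; ring
    _ = stringVol (aStr a) ε / ε ^ (1 - D) := by
        rw [vol_formula ha hε, div_eq_mul_inv, ← Real.rpow_neg hε.le]
        congr 2
        ring

lemma gd_eq {a : ℝ} (d : ℝ) : ∀ᶠ ε in 𝓝[>] (0:ℝ),
    (stringVol (aStr a) ε / ε ^ (1 - 1/(a+1))) * ε ^ (d - 1/(a+1))
      = stringVol (aStr a) ε / ε ^ (1 - d) := by
  filter_upwards [eventually_mem_nhdsWithin] with ε (hε : ε ∈ Set.Ioi (0:ℝ))
  have hε : (0:ℝ) < ε := hε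
  set D := 1/(a+1)
  have h1 : ε ^ (1 - d) = ε ^ (1 - D) * ε ^ (D - d) := by
    rw [← Real.rpow_add hε]
    congr 1
    ring
  have h2 : ε ^ (d - D) = (ε ^ (D - d))⁻¹ := by
    rw [← Real.rpow_neg (le_of_lt hε)]
    congr 1
    ring
  rw [h1, h2, ← div_eq_mul_inv, div_div]

lemma minkDim_aStr {a : ℝ} (ha : 0 < a) : minkDim (aStr a) = 1/(a+1) := by
  set D := 1/(a+1) with hD
  have ha1 : (0:ℝ) < a + 1 := by linarith
  have hDpos : 0 < D := by rw [hD]; positivity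
  have h1D : 0 < 1 - D := by
    rw [hD, sub_pos, div_lt_one ha1]; linarith
  set M := 2 ^ (1 - D) * a ^ D / (1 - D) with hM
  have hMpos : 0 < M := by
    rw [hM]
    have := Real.rpow_pos_of_pos (show (0:ℝ) < 2 by norm_num) (1 - D)
    have := Real.rpow_pos_of_pos ha D
    positivity
  have hcase_lt : ∀ d : ℝ, d < D → upperContent (aStr a) d = ⊤ := by
    intro d hd
    have h0 : Tendsto (fun ε : ℝ => ε ^ (D - d)) (𝓝[>] 0) (𝓝[>] 0) := by
      rw [tendsto_nhdsWithin_iff]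
      refine ⟨tendsto_rpow_zero (by linarith), ?_⟩
      filter_upwards [eventually_mem_nhdsWithin] with ε (hε : ε ∈ Set.Ioi (0:ℝ))
      exact Real.rpow_pos_of_pos hε _
    have hpow : Tendsto (fun ε : ℝ => ε ^ (d - D)) (𝓝[>] 0) atTop := by
      apply h0.inv_tendsto_nhdsGT_zero.congr'
      filter_upwards [eventually_mem_nhdsWithin] with ε (hε : ε ∈ Set.Ioi (0:ℝ))
      simp only [Pi.inv_apply]
      rw [← Real.rpow_neg (le_of_lt hε)]
      congr 1
      ring
    have hmul : Tendsto (fun ε : ℝ =>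
        (stringVol (aStr a) ε / ε ^ (1 - D)) * ε ^ (d - D)) (𝓝[>] 0) atTop :=
      Tendsto.pos_mul_atTop hMpos (mink_main ha) hpow
    have hfin : Tendsto (fun ε : ℝ => stringVol (aStr a) ε / ε ^ (1 - d)) (𝓝[>] 0) atTop :=
      hmul.congr' (gd_eq d)
    have : Tendsto (fun ε : ℝ => ENNReal.ofReal (stringVol (aStr a) ε / ε ^ (1 - d)))
        (𝓝[>] 0) (𝓝 ⊤) := ENNReal.tendsto_ofReal_atTop.comp hfin
    exact this.limsup_eq
  have hcase_ge : ∀ d : ℝ, D ≤ d → upperContent (aStr a) d < ⊤ := by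
    intro d hd
    rcases eq_or_lt_of_le hd with heq | hlt
    · have : upperContent (aStr a) d = ENNReal.ofReal M := by
        subst heq
        exact (ENNReal.tendsto_ofReal (mink_main ha)).limsup_eq
      rw [this]; exact ENNReal.ofReal_lt_top
    · have htend : Tendsto (fun ε : ℝ => stringVol (aStr a) ε / ε ^ (1 - d)) (𝓝[>] 0)
          (𝓝 (M * 0)) := by
        apply Tendsto.congr' (gd_eq d)
        exact (mink_main ha).mul (tendsto_rpow_zero (by linarith))
      have : upperContent (aStr a) d = ENNReal.ofReal (M * 0) :=
        (ENNReal.tendsto_ofReal htend).limsup_eq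
      rw [this]; exact ENNReal.ofReal_lt_top
  have hset : {d : ℝ | 0 ≤ d ∧ upperContent (aStr a) d < ⊤} = Set.Ici D := by
    ext d
    simp only [Set.mem_setOf_eq, Set.mem_Ici]
    constructor
    · rintro ⟨-, hfin⟩
      by_contra hlt
      push_neg at hlt
      rw [hcase_lt d hlt] at hfin
      exact absurd hfin (lt_irrefl ⊤)
    · intro hd
      exact ⟨le_trans hDpos.le hd, hcase_ge d hd⟩
  unfold minkDim
  rw [hset, csInf_Ici]

/-- (The `a`-string) For `a > 0`, the fractal string with
lengths `ℓ_j = j^{-a} - (j+1)^{-a}` has Minkowski dimension `D = 1/(a+1)` and is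
Minkowski measurable with Minkowski content `M = 2^{1-D} a^D / (1-D)`. -/
theorem a_string_dimension_and_content (a : ℝ) (ha : 0 < a) :
    minkDim (fun j : ℕ => ((j : ℝ) + 1) ^ (-a) - ((j : ℝ) + 2) ^ (-a)) = 1 / (a + 1) ∧
    MinkMeasurableWith (fun j : ℕ => ((j : ℝ) + 1) ^ (-a) - ((j : ℝ) + 2) ^ (-a))
      (1 / (a + 1))
      (2 ^ (1 - 1 / (a + 1)) * a ^ (1 / (a + 1)) / (1 - 1 / (a + 1))) := by
  exact ⟨minkDim_aStr ha, mink_main ha⟩
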